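/- The difference operators X and Z satisfy the q-commutation relation X Z - q Z X = -Z² - Z - (1-q) X, when acting on functions f : ℤ → ℝ (with parameters generic so that no denominators [x-α]_q vanish on the relevant grid). -/

import Mathlib

noncomputable def qnum (q y : ℝ) : ℝ := (1 - q ^ y) / (1 - q)

/-- `X f(x) = [x-α]_q f(x) - q^{-α} [x]_q f(x-1)`. -/
noncomputable def opX (q α : ℝ) (f : ℤ → ℝ) (x : ℤ) : ℝ :=
  qnum q ((x : ℝ) - α) * f x - q ^ (-α) * qnum q (x : ℝ) * f (x - 1)

/-- `Z f(x) = ([-x]_q/[α-x]_q) f(x-1) - f(x)`. -/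
noncomputable def opZ (q α : ℝ) (f : ℤ → ℝ) (x : ℤ) : ℝ :=
  (qnum q (-(x : ℝ)) / qnum q (α - (x : ℝ))) * f (x - 1) - f x

set_option maxHeartbeats 4000000 in
/-- the q-commutation relation `XZ - qZX = -Z² - Z - (1-q)X` on
functions `f : ℤ → ℝ`. -/
theorem XZ_q_commutation (q α : ℝ) (hq : 0 < q) (hq1 : q ≠ 1)
    (hα : ∀ x : ℤ, qnum q (α - (x : ℝ)) ≠ 0)
    (f : ℤ → ℝ) (x : ℤ) :
    opX q α (opZ q α f) x - q * opZ q α (opX q α f) x =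
      -(opZ q α (opZ q α f) x) - opZ q α f x - (1 - q) * opX q α f x := by
  have hq0 : q ≠ 0 := ne_of_gt hq
  have hq1' : (1 : ℝ) - q ≠ 0 := sub_ne_zero.mpr (Ne.symm hq1)
  have h1 := hα x
  have h2 := hα (x - 1)
  simp only [qnum] at h1 h2
  push_cast at h2
  rw [div_ne_zero_iff] at h1 h2
  have hA : q ^ (x : ℝ) ≠ 0 := (Real.rpow_pos_of_pos hq _).ne'
  have hB : q ^ α ≠ 0 := (Real.rpow_pos_of_pos hq _).ne'
  simp only [sub_eq_add_neg, Real.rpow_add hq, Real.rpow_neg hq.le,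
    Real.rpow_one] at h1 h2
  simp only [opX, opZ, qnum]
  push_cast
  simp only [sub_eq_add_neg, neg_add, neg_neg, Real.rpow_add hq, Real.rpow_neg hq.le,
    Real.rpow_one]
  set A := q ^ (x : ℝ) with hAdef
  set B := q ^ α with hBdef
  obtain ⟨h1, -⟩ := h1
  obtain ⟨h2, -⟩ := h2
  field_simp at h1 h2
  replace h1 : A + -B ≠ 0 := fun h => h1 (by rw [h, zero_div])
  replace h2 : A + -(B * q) ≠ 0 := fun h => h2 (by rw [h, zero_div])
  have d1 : A - B ≠ 0 := by intro h; exact h1 (by linarith)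
  have d2 : A - B * q ≠ 0 := by intro h; exact h2 (by linarith)
  field_simp [d1, d2]
  have e0 : (1:ℝ) + -q ≠ 0 := by intro h; exact hq1 (by linarith)
  have e1 : A + -B ≠ 0 := h1
  have e2 : A + -(B * q) ≠ 0 := h2
  field_simp [e0, e1, e2]
  ring
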